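/- arXiv:1412.1563 — 2 statements merged into one kernel-verified Lean document; each statement's English description precedes it below -/
import Mathlib

section
/- For every n ≥ 2, the greatest element a_n of the set {t > 0 : S_i(t) ≠ 0 for all 1 ≤ i < n, and x_n(t) = 0} is strictly larger than the greatest element b_n of the set {t > 0 : S_i(t) ≠ 0 for all 1 ≤ i < n, and S_n(t) = 0}; that is, a_n > b_n. -/
open Finset Set Filter Topology

/-- `XS t n = (x_n(t), S_n(t))`, defined recursively by `x_1(t) = t`, `S_1(t) = t`,
`x_{n+1}(t) = x_n(t) - 1/S_n(t)` and `S_{n+1}(t) = S_n(t) + x_{n+1}(t)`.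
(When some `S_i(t) = 0` the junk convention `1/0 = 0` of real division applies, but the
statements below only concern parameters `t` for which the relevant `S_i(t) ≠ 0`.) -/
noncomputable def XS (t : ℝ) : ℕ → ℝ × ℝ
  | 0 => (0, 0)
  | 1 => (t, t)
  | (n + 2) =>
      ((XS t (n + 1)).1 - 1 / (XS t (n + 1)).2,
        (XS t (n + 1)).2 + ((XS t (n + 1)).1 - 1 / (XS t (n + 1)).2))

/-- `x_n(t)`, the `n`-th term of the recursion started at `x_1(t) = t`. -/
noncomputable def xf (n : ℕ) (t : ℝ) : ℝ := (XS t n).1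

/-- `S_n(t) = x_1(t) + ... + x_n(t)`, the `n`-th partial sum of the recursion started at
`x_1(t) = t`. -/
noncomputable def Sf (n : ℕ) (t : ℝ) : ℝ := (XS t n).2

/-- `R_n = {t > 0 : S_i(t) ≠ 0 for 1 ≤ i < n, and x_n(t) = 0}`. -/
def Rset (n : ℕ) : Set ℝ :=
  {t | 0 < t ∧ (∀ i, 1 ≤ i → i < n → Sf i t ≠ 0) ∧ xf n t = 0}

/-- `Q_n = {t > 0 : S_i(t) ≠ 0 for 1 ≤ i < n, and S_n(t) = 0}`. -/
def Qset (n : ℕ) : Set ℝ :=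
  {t | 0 < t ∧ (∀ i, 1 ≤ i → i < n → Sf i t ≠ 0) ∧ Sf n t = 0}

lemma xf_one (t : ℝ) : xf 1 t = t := rfl
lemma Sf_one (t : ℝ) : Sf 1 t = t := rfl
lemma xf_succ (n : ℕ) (t : ℝ) : xf (n+2) t = xf (n+1) t - 1 / Sf (n+1) t := rfl
lemma Sf_succ (n : ℕ) (t : ℝ) : Sf (n+2) t = Sf (n+1) t + xf (n+2) t := rfl

lemma grow (t : ℝ) : ∀ i : ℕ, (i:ℝ) + 2 ≤ t →
    t - (i:ℝ) / (t-1) ≤ xf (i+1) t ∧ t - 1 ≤ Sf (i+1) t := by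
  intro i
  induction i with
  | zero =>
    intro h
    constructor
    · norm_num [xf_one]
    · have hh : Sf (0+1) t = t := rfl; linarith
  | succ j IH =>
    intro h
    push_cast at h
    have hj : (j:ℝ) + 2 ≤ t := by linarith
    obtain ⟨hx, hS⟩ := IH hj
    have hjn : (0:ℝ) ≤ j := Nat.cast_nonneg j
    have ht1 : (0:ℝ) < t - 1 := by linarith
    have hdiv : 1 / Sf (j+1) t ≤ 1 / (t-1) := one_div_le_one_div_of_le ht1 hS
    have hxnew : t - ((j:ℝ)+1) / (t-1) ≤ xf (j+1+1) t := by
      rw [xf_succ]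
      have e : ((j:ℝ)+1)/(t-1) = (j:ℝ)/(t-1) + 1/(t-1) := by ring
      rw [e]; linarith
    have hxpos : 0 ≤ t - ((j:ℝ)+1) / (t-1) := by
      rw [sub_nonneg, div_le_iff₀ ht1]; nlinarith
    refine ⟨by push_cast; exact hxnew, ?_⟩
    rw [Sf_succ]
    linarith

/-- continuity of the pair in `t` where the needed partial sums don't vanish -/
lemma contXS (c : ℝ) : ∀ i : ℕ, (∀ j, 1 ≤ j → j < i → Sf j c ≠ 0) →
    ContinuousAt (fun t => XS t i) c := by
  intro i
  induction i using Nat.strong_induction_on with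
  | _ i IH =>
    match i with
    | 0 => intro _; exact continuousAt_const
    | 1 => intro _; exact (continuous_id.prodMk continuous_id).continuousAt
    | (m+2) =>
      intro h
      have h1 : ContinuousAt (fun t => XS t (m+1)) c :=
        IH (m+1) (by omega) (fun j hj1 hj2 => h j hj1 (by omega))
      have hS : (XS c (m+1)).2 ≠ 0 := h (m+1) (by omega) (by omega)
      have hx : ContinuousAt (fun t => (XS t (m+1)).1) c := h1.fst
      have hs : ContinuousAt (fun t => (XS t (m+1)).2) c := h1.snd
      have hdiv : ContinuousAt (fun t => 1 / (XS t (m+1)).2) c :=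
        continuousAt_const.div hs hS
      have hx2 : ContinuousAt (fun t => (XS t (m+1)).1 - 1 / (XS t (m+1)).2) c := hx.sub hdiv
      exact hx2.prodMk (hs.add hx2)

lemma cont_xf (c : ℝ) (i : ℕ) (h : ∀ j, 1 ≤ j → j < i → Sf j c ≠ 0) :
    ContinuousAt (xf i) c := (contXS c i h).fst

lemma cont_Sf (c : ℝ) (i : ℕ) (h : ∀ j, 1 ≤ j → j < i → Sf j c ≠ 0) :
    ContinuousAt (Sf i) c := (contXS c i h).snd

/-- For every `n ≥ 2`, the greatest element `a_n` of `R_n` is strictly larger than the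
greatest element `b_n` of `Q_n`. -/
theorem greatest_Rset_gt_greatest_Qset (n : ℕ) (hn : 2 ≤ n) (a b : ℝ)
    (ha : IsGreatest (Rset n) a) (hb : IsGreatest (Qset n) b) :
    b < a := by
  obtain ⟨m, rfl⟩ : ∃ m, n = m + 2 := ⟨n - 2, by omega⟩
  obtain ⟨⟨hb0, hbS, hbn⟩, hbub⟩ := hb
  obtain ⟨haR, haub⟩ := ha
  set P : Set ℝ :=
    {s | ∀ t, s < t → ((∀ i, 1 ≤ i → i < m+2 → 0 < Sf i t) ∧ 0 < xf (m+2) t)} with hP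
  have hPmem : ((m:ℝ) + 3) ∈ P := by
    intro t ht
    have hm0 : (0:ℝ) ≤ m := Nat.cast_nonneg m
    have ht1 : (0:ℝ) < t - 1 := by linarith
    constructor
    · intro i h1 h2
      obtain ⟨j, rfl⟩ : ∃ j, i = j + 1 := ⟨i - 1, by omega⟩
      have hjm : (j:ℝ) ≤ (m:ℝ) := by exact_mod_cast (by omega : j ≤ m)
      have hj : (j:ℝ) + 2 ≤ t := by linarith
      have hg := (grow t j hj).2
      linarith
    · have hj : ((m+1:ℕ):ℝ) + 2 ≤ t := by push_cast; linarith
      have hg := (grow t (m+1) hj).1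
      push_cast at hg
      have hlt : ((m:ℝ)+1)/(t-1) < t := by rw [div_lt_iff₀ ht1]; nlinarith
      linarith
  have hPne : P.Nonempty := ⟨_, hPmem⟩
  have hblb : ∀ s ∈ P, b ≤ s := by
    intro s hs
    by_contra hcon
    push_neg at hcon
    obtain ⟨h1, h2⟩ := hs b hcon
    have hSm : 0 < Sf (m+1) b := h1 (m+1) (by omega) (by omega)
    have he : Sf (m+2) b = Sf (m+1) b + xf (m+2) b := Sf_succ m b
    rw [hbn] at he
    linarith
  have hbdd : BddBelow P := ⟨b, hblb⟩
  set c := sInf P with hcdef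
  have hbc : b ≤ c := le_csInf hPne hblb
  have hc0 : 0 < c := lt_of_lt_of_le hb0 hbc
  have hgt : ∀ t, c < t → ((∀ i, 1 ≤ i → i < m+2 → 0 < Sf i t) ∧ 0 < xf (m+2) t) := by
    intro t ht
    obtain ⟨s, hsP, hst⟩ := exists_lt_of_csInf_lt hPne ht
    exact hsP t hst
  have hSc : ∀ i, 1 ≤ i → i < m+2 → 0 < Sf i c := by
    intro i
    induction i using Nat.strong_induction_on with
    | _ i IH =>
      intro h1 hi
      have hcont : ContinuousAt (Sf i) c :=
        cont_Sf c i (fun j hj1 hj2 => (IH j hj2 hj1 (by omega)).ne')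
      have hpos : ∀ t, c < t → 0 < Sf i t := fun t ht => (hgt t ht).1 i h1 hi
      have hlim : Tendsto (Sf i) (𝓝[>] c) (𝓝 (Sf i c)) :=
        hcont.tendsto.mono_left nhdsWithin_le_nhds
      have h0 : 0 ≤ Sf i c := by
        refine ge_of_tendsto hlim ?_
        filter_upwards [self_mem_nhdsWithin] with t ht
        exact (hpos t ht).le
      rcases h0.lt_or_eq with h | h
      · exact h
      · exfalso
        obtain ⟨j, rfl⟩ : ∃ j, i = j + 1 := ⟨i - 1, by omega⟩
        have hxcont : ContinuousAt (xf (j+1)) c :=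
          cont_xf c (j+1) (fun k hk1 hk2 => (IH k hk2 hk1 (by omega)).ne')
        have hlim0 : Tendsto (Sf (j+1)) (𝓝[>] c) (𝓝[>] (0:ℝ)) := by
          rw [tendsto_nhdsWithin_iff]
          refine ⟨by rw [← h] at hlim; exact hlim, ?_⟩
          filter_upwards [self_mem_nhdsWithin] with t ht
          exact hpos t ht
        have hinv : Tendsto (fun t => 1 / Sf (j+1) t) (𝓝[>] c) atTop := by
          simpa [one_div, Function.comp_def] using tendsto_inv_nhdsGT_zero.comp hlim0
        have hxlim : Tendsto (xf (j+1)) (𝓝[>] c) (𝓝 (xf (j+1) c)) :=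
          hxcont.tendsto.mono_left nhdsWithin_le_nhds
        have hninv : Tendsto (fun t => -(1 / Sf (j+1) t)) (𝓝[>] c) atBot :=
          tendsto_neg_atTop_atBot.comp hinv
        have hxb : Tendsto (xf (j+2)) (𝓝[>] c) atBot := by
          have hsum : Tendsto (fun t => xf (j+1) t + -(1 / Sf (j+1) t)) (𝓝[>] c) atBot :=
            hxlim.add_atBot hninv
          have : (fun t => xf (j+1) t + -(1 / Sf (j+1) t)) = xf (j+2) := by
            funext t; rw [xf_succ]; ring
          rwa [this] at hsum
        rcases (by omega : j + 2 < m + 2 ∨ j + 2 = m + 2) with hlt | heq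
        · have hSb : Tendsto (Sf (j+2)) (𝓝[>] c) atBot := by
            have hsum : Tendsto (fun t => Sf (j+1) t + xf (j+2) t) (𝓝[>] c) atBot :=
              ((hlim0.mono_right nhdsWithin_le_nhds)).add_atBot hxb
            have : (fun t => Sf (j+1) t + xf (j+2) t) = Sf (j+2) := by
              funext t; rw [Sf_succ]
            rwa [this] at hsum
          have hev : ∀ᶠ t in 𝓝[>] c, Sf (j+2) t < 0 := hSb.eventually (eventually_lt_atBot 0)
          have hev2 : ∀ᶠ t in 𝓝[>] c, 0 < Sf (j+2) t := by
            filter_upwards [self_mem_nhdsWithin] with t ht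
            exact (hgt t ht).1 (j+2) (by omega) hlt
          obtain ⟨t, h1', h2'⟩ := Filter.Eventually.exists (f := 𝓝[>] c) (hev.and hev2)
          linarith
        · have hev : ∀ᶠ t in 𝓝[>] c, xf (j+2) t < 0 := hxb.eventually (eventually_lt_atBot 0)
          have hev2 : ∀ᶠ t in 𝓝[>] c, 0 < xf (j+2) t := by
            filter_upwards [self_mem_nhdsWithin] with t ht
            have h3 := (hgt t ht).2
            rwa [← heq] at h3
          obtain ⟨t, h1', h2'⟩ := Filter.Eventually.exists (f := 𝓝[>] c) (hev.and hev2)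
          linarith
  have hScne : ∀ j, 1 ≤ j → j < m+2 → Sf j c ≠ 0 := fun j h1 h2 => (hSc j h1 h2).ne'
  have hxcont : ContinuousAt (xf (m+2)) c := cont_xf c (m+2) hScne
  have hxpos : ∀ t, c < t → 0 < xf (m+2) t := fun t ht => (hgt t ht).2
  have hx0 : 0 ≤ xf (m+2) c := by
    have hxlim2 : Tendsto (xf (m+2)) (𝓝[>] c) (𝓝 (xf (m+2) c)) :=
      hxcont.tendsto.mono_left nhdsWithin_le_nhds
    refine ge_of_tendsto hxlim2 ?_
    filter_upwards [self_mem_nhdsWithin] with t ht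
    exact (hxpos t ht).le
  have hxc : xf (m+2) c = 0 := by
    rcases hx0.lt_or_eq with h | h
    · exfalso
      have hev : ∀ᶠ t in 𝓝 c, (∀ i ∈ Finset.Ico 1 (m+2), 0 < Sf i t) ∧ 0 < xf (m+2) t := by
        refine Filter.Eventually.and ?_ ?_
        · rw [eventually_all_finset]
          intro i hi
          simp only [Finset.mem_Ico] at hi
          have hci : ContinuousAt (Sf i) c :=
            cont_Sf c i (fun j hj1 hj2 => hScne j hj1 (by omega))
          exact hci.tendsto.eventually (eventually_gt_nhds (hSc i hi.1 hi.2))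
        · exact hxcont.tendsto.eventually (eventually_gt_nhds h)
      obtain ⟨ε, hε, hball⟩ := Metric.eventually_nhds_iff.mp hev
      have hsP : c - ε/2 ∈ P := by
        intro t ht
        rcases lt_or_ge c t with h' | h'
        · exact hgt t h'
        · have hd : dist t c < ε := by
            rw [Real.dist_eq, abs_lt]; constructor <;> linarith
          obtain ⟨hA, hB⟩ := hball hd
          exact ⟨fun i hi1 hi2 => hA i (Finset.mem_Ico.mpr ⟨hi1, hi2⟩), hB⟩
      have hle : c ≤ c - ε/2 := csInf_le hbdd hsP
      linarith
    · exact h.symm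
  have hcR : c ∈ Rset (m+2) := ⟨hc0, hScne, hxc⟩
  have hca : c ≤ a := haub hcR
  have hbnec : b ≠ c := by
    intro h
    have h2 : Sf (m+2) c = Sf (m+1) c + xf (m+2) c := Sf_succ m c
    have h3 : 0 < Sf (m+1) c := hSc (m+1) (by omega) (by omega)
    rw [← h] at h2 h3
    rw [hbn, h] at h2
    rw [h] at h3
    rw [hxc] at h2
    linarith
  exact lt_of_lt_of_le (lt_of_le_of_ne hbc hbnec) hca
end

section
/- There exists a 1-Lipschitz function h : ℝ → ℝ (i.e., |h(a) − h(b)| ≤ |a − b| for all a, b) such that (1/N) Σ_{n=1}^N h(x_{N,n}) = 0 and ∫_ℝ h(x) y_N(x) dx = x_{N,1}/(2(N−1)); consequently the Wasserstein distance between the empirical distribution 𝕡_N = (1/N) Σ_{n=1}^N δ_{x_{N,n}} and the distribution with density y_N is at least x_{N,1}/(2(N−1)). -/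
open Finset

/-- Partial sum `S_n = x_1 + ... + x_n`. -/
noncomputable def S (x : ℕ → ℝ) (n : ℕ) : ℝ := ∑ i ∈ Finset.Icc 1 n, x i

/-- `x_1, ..., x_N` is a solution of the recursion `x_{n+1} = x_n - 1/S_n`
with all relevant partial sums nonzero. -/
def IsSolution (N : ℕ) (x : ℕ → ℝ) : Prop :=
  ∀ n, 1 ≤ n → n ≤ N - 1 → S x n ≠ 0 ∧ x (n + 1) = x n - 1 / S x n

/-- Zero-median property: the middle value is `0` when `N` is odd, and the two middle
values are negatives of each other when `N` is even. -/
def ZeroMedian (N : ℕ) (x : ℕ → ℝ) : Prop :=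
  (Odd N → x ((N + 1) / 2) = 0) ∧ (Even N → x (N / 2) = - x (N / 2 + 1))

/-- The piecewise-constant density `y_N`: it equals `S_{N,n}/(N-1)`
(equivalently `1/((N-1)(x_{N,n} - x_{N,n+1}))`) on `[x_{N,n+1}, x_{N,n})` for
`n = 1, ..., N-1`, and `0` outside `[x_{N,N}, x_{N,1})`. -/
noncomputable def yDen (N : ℕ) (x : ℕ → ℝ) (t : ℝ) : ℝ :=
  ∑ n ∈ Finset.Icc 1 (N - 1), if x (n + 1) ≤ t ∧ t < x n then S x n / ((N : ℝ) - 1) else 0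
open MeasureTheory

lemma S_succ (x : ℕ → ℝ) (n : ℕ) : S x (n + 1) = S x n + x (n + 1) := by
  unfold S
  exact Finset.sum_Icc_succ_top (by omega) x


lemma S_one (x : ℕ → ℝ) : S x 1 = x 1 := by
  unfold S; simp


lemma comp_lemma (N : ℕ) (u v : ℕ → ℝ)
    (hu : ∀ n, 1 ≤ n → n ≤ N - 1 → 0 < S u n ∧ u (n + 1) = u n - 1 / S u n)
    (hv : ∀ n, 1 ≤ n → n ≤ N - 1 → 0 < S v n ∧ v (n + 1) = v n - 1 / S v n)
    (h1 : u 1 < v 1) :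
    ∀ n, 1 ≤ n → n ≤ N → u n < v n ∧ S u n < S v n := by
  intro n
  induction n with
  | zero => intro h _; exact absurd h (by omega)
  | succ m ih =>
    intro _ hnN
    rcases Nat.eq_zero_or_pos m with hm | hm
    · subst hm
      exact ⟨h1, by rw [S_one, S_one]; exact h1⟩
    · obtain ⟨hum, hsm⟩ := ih hm (by omega)
      obtain ⟨hSu, hru⟩ := hu m hm (by omega)
      obtain ⟨hSv, hrv⟩ := hv m hm (by omega)
      have h1d : 1 / S v m < 1 / S u m := one_div_lt_one_div_of_lt hSu hsm
      have hx : u (m + 1) < v (m + 1) := by rw [hru, hrv]; linarith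
      exact ⟨hx, by rw [S_succ, S_succ]; linarith⟩


lemma min_integral (a b : ℝ) (hab : a ≤ b) :
    ∫ t in a..b, min (b - t) (t - a) = (b - a)^2 / 4 := by
  have hc : Continuous fun t : ℝ => min (b - t) (t - a) :=
    (continuous_const.sub continuous_id).min (continuous_id.sub continuous_const)
  set m := (a + b) / 2 with hm
  have ham : a ≤ m := by rw [hm]; linarith
  have hmb : m ≤ b := by rw [hm]; linarith
  have key : (∫ t in a..m, min (b - t) (t - a)) + (∫ t in m..b, min (b - t) (t - a))
      = ∫ t in a..b, min (b - t) (t - a) :=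
    intervalIntegral.integral_add_adjacent_intervals
      (hc.intervalIntegrable a m) (hc.intervalIntegrable m b)
  have e1 : (∫ t in a..m, min (b - t) (t - a)) = (b - a)^2/8 := by
    have : (∫ t in a..m, min (b - t) (t - a)) = ∫ t in a..m, (t - a) := by
      apply intervalIntegral.integral_congr
      intro t ht
      rw [Set.uIcc_of_le ham] at ht
      exact min_eq_right (by rw [hm] at ht; rcases ht with ⟨h1, h2⟩; simp at h2 ⊢; linarith)
    rw [this, intervalIntegral.integral_sub intervalIntegral.intervalIntegrable_id intervalIntegrable_const,
      integral_id, intervalIntegral.integral_const]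
    rw [hm]; simp [smul_eq_mul]; ring
  have e2 : (∫ t in m..b, min (b - t) (t - a)) = (b - a)^2/8 := by
    have : (∫ t in m..b, min (b - t) (t - a)) = ∫ t in m..b, (b - t) := by
      apply intervalIntegral.integral_congr
      intro t ht
      rw [Set.uIcc_of_le hmb] at ht
      exact min_eq_left (by rw [hm] at ht; rcases ht with ⟨h1, h2⟩; linarith)
    rw [this, intervalIntegral.integral_sub intervalIntegrable_const intervalIntegral.intervalIntegrable_id,
      integral_id, intervalIntegral.integral_const]
    rw [hm]; simp [smul_eq_mul]; ring
  rw [e1, e2] at key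
  rw [← key]; ring


lemma Spos (N : ℕ) (x : ℕ → ℝ) (hsol : IsSolution N x)
    (hdec : ∀ n, 1 ≤ n → n < N → x (n + 1) < x n) :
    ∀ n, 1 ≤ n → n ≤ N - 1 → 0 < S x n := by
  intro n h1 h2
  obtain ⟨hne, hrec⟩ := hsol n h1 h2
  have hlt := hdec n h1 (by omega)
  rw [hrec] at hlt
  exact one_div_pos.mp (by linarith)


lemma symm_lemma (N : ℕ) (hN : 3 ≤ N) (x : ℕ → ℝ)
    (hsol : IsSolution N x) (hdec : ∀ n, 1 ≤ n → n < N → x (n + 1) < x n)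
    (hmean : ∑ i ∈ Finset.Icc 1 N, x i = 0) : x N = - x 1 := by
  have hSN : S x N = 0 := hmean
  have hpos := Spos N x hsol hdec
  set z : ℕ → ℝ := fun n => - x (N + 1 - n) with hz
  have hSz : ∀ n, n ≤ N → S z n = S x (N - n) := by
    intro n hn
    have h1 : S z n = -(∑ j ∈ Finset.Icc (N + 1 - n) N, x j) := by
      unfold S
      rw [← Finset.sum_neg_distrib]
      refine Finset.sum_nbij' (fun i => N + 1 - i) (fun j => N + 1 - j) ?_ ?_ ?_ ?_ ?_
      · intro a ha; simp only [Finset.mem_Icc] at ha ⊢; omega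
      · intro a ha; simp only [Finset.mem_Icc] at ha ⊢; omega
      · intro a ha; simp only [Finset.mem_Icc] at ha; omega
      · intro a ha; simp only [Finset.mem_Icc] at ha; omega
      · intro a ha; rfl
    have h2 : S x (N - n) + (∑ j ∈ Finset.Icc (N + 1 - n) N, x j) = S x N := by
      unfold S
      have e1 : Finset.Icc 1 (N - n) = Finset.Ioc 0 (N - n) := by
        rw [← Finset.Icc_add_one_left_eq_Ioc]; rfl
      have e2 : Finset.Icc (N + 1 - n) N = Finset.Ioc (N - n) N := by
        rw [← Finset.Icc_add_one_left_eq_Ioc]; congr 1; omega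
      have e3 : Finset.Icc 1 N = Finset.Ioc 0 N := by
        rw [← Finset.Icc_add_one_left_eq_Ioc]; rfl
      rw [e1, e2, e3]
      exact Finset.sum_Ioc_consecutive _ (Nat.zero_le _) (Nat.sub_le N n)
    rw [hSN] at h2
    rw [h1]; linarith
  have hzsol : ∀ n, 1 ≤ n → n ≤ N - 1 → 0 < S z n ∧ z (n + 1) = z n - 1 / S z n := by
    intro n h1 h2
    have hmem : 1 ≤ N - n ∧ N - n ≤ N - 1 := by omega
    have hS : S z n = S x (N - n) := hSz n (by omega)
    refine ⟨by rw [hS]; exact hpos _ hmem.1 hmem.2, ?_⟩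
    obtain ⟨-, hrec⟩ := hsol (N - n) hmem.1 hmem.2
    have e1 : N + 1 - (n + 1) = N - n := by omega
    have e2 : N - n + 1 = N + 1 - n := by omega
    rw [hz]
    simp only [e1]
    rw [hS]
    rw [e2] at hrec
    rw [hrec]
    ring
  have hxsol : ∀ n, 1 ≤ n → n ≤ N - 1 → 0 < S x n ∧ x (n + 1) = x n - 1 / S x n := by
    intro n h1 h2
    exact ⟨hpos n h1 h2, (hsol n h1 h2).2⟩
  have hz1 : z 1 = - x N := by rw [hz]; simp
  have hSzN : S z N = 0 := by rw [hSz N le_rfl]; simp [S]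
  rcases lt_trichotomy (x 1) (z 1) with hlt | heq | hgt
  · have := (comp_lemma N x z hxsol hzsol hlt N (by omega) le_rfl).2
    rw [hSN, hSzN] at this; exact absurd this (lt_irrefl 0)
  · rw [hz1] at heq; linarith
  · have := (comp_lemma N z x hzsol hxsol hgt N (by omega) le_rfl).2
    rw [hSN, hSzN] at this; exact absurd this (lt_irrefl 0)


lemma x_anti (N : ℕ) (x : ℕ → ℝ) (hdec : ∀ n, 1 ≤ n → n < N → x (n + 1) < x n) :
    ∀ k m, 1 ≤ k → k ≤ m → m ≤ N → x m ≤ x k := by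
  intro k m hk hkm hmN
  induction m with
  | zero => omega
  | succ p ih =>
    rcases Nat.eq_or_lt_of_le hkm with h | h
    · rw [h]
    · have hp : k ≤ p := by omega
      have := ih hp (by omega)
      have h2 := hdec p (by omega) (by omega)
      linarith


/-- Lower bound on the Wasserstein distance between the empirical distribution `𝕡_N` and
the distribution with density `y_N`: there is a 1-Lipschitz `h : ℝ → ℝ` with
`(1/N) ∑_{n=1}^N h(x_{N,n}) = 0` and `∫ h(t) y_N(t) dt = x_{N,1} / (2(N-1))`; consequently
the difference of the two expectations of `h` is at least `x_{N,1} / (2(N-1))`. -/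
theorem wasserstein_lower_bound (N : ℕ) (hN : 3 ≤ N) (x : ℕ → ℝ)
    (hsol : IsSolution N x) (hdec : ∀ n, 1 ≤ n → n < N → x (n + 1) < x n)
    (hmean : ∑ i ∈ Finset.Icc 1 N, x i = 0) :
    ∃ h : ℝ → ℝ, (∀ a b, |h a - h b| ≤ |a - b|) ∧
      (1 / (N : ℝ)) * ∑ n ∈ Finset.Icc 1 N, h (x n) = 0 ∧
      (∫ t, h t * yDen N x t) = x 1 / (2 * ((N : ℝ) - 1)) ∧
      x 1 / (2 * ((N : ℝ) - 1)) ≤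
        |(1 / (N : ℝ)) * ∑ n ∈ Finset.Icc 1 N, h (x n) - ∫ t, h t * yDen N x t| := by
  have hNe : (Finset.Icc 1 N).Nonempty := ⟨1, by simp only [Finset.mem_Icc]; omega⟩
  set h : ℝ → ℝ := fun t => (Finset.Icc 1 N).inf' hNe (fun k => |t - x k|) with hh
  -- Lipschitz
  have key : ∀ a b : ℝ, h a - h b ≤ |a - b| := by
    intro a b
    obtain ⟨k, hk, hkeq⟩ := Finset.exists_mem_eq_inf' hNe (fun k => |b - x k|)
    have h1 : h a ≤ |a - x k| := Finset.inf'_le _ hk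
    have h2 : |a - x k| ≤ |a - b| + |b - x k| := abs_sub_le a b (x k)
    have h3 : h b = |b - x k| := hkeq
    linarith
  have hlip : ∀ a b : ℝ, |h a - h b| ≤ |a - b| := by
    intro a b
    rw [abs_sub_le_iff]
    exact ⟨key a b, by rw [abs_sub_comm]; exact key b a⟩
  -- sum is zero
  have hzero : ∀ n ∈ Finset.Icc 1 N, h (x n) = 0 := by
    intro n hn
    apply le_antisymm
    · have h1 : h (x n) ≤ |x n - x n| := Finset.inf'_le _ hn
      simpa using h1
    · exact Finset.le_inf' _ _ (fun k _ => abs_nonneg _)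
  have hsum : (1 / (N : ℝ)) * ∑ n ∈ Finset.Icc 1 N, h (x n) = 0 := by
    rw [Finset.sum_congr rfl hzero]
    simp
  -- integral
  have hpos := Spos N x hsol hdec
  have hanti := x_anti N x hdec
  have hxN : x N = - x 1 := symm_lemma N hN x hsol hdec hmean
  have hx1 : 0 < x 1 := by
    have := hpos 1 le_rfl (by omega)
    rwa [S_one] at this
  have hD : (0:ℝ) < (N : ℝ) - 1 := by
    have : (3:ℝ) ≤ (N:ℝ) := by exact_mod_cast hN
    linarith
  have hval : (0:ℝ) < x 1 / (2 * ((N : ℝ) - 1)) := by positivity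
  -- rewrite integrand
  have hint : (fun t => h t * yDen N x t)
      = fun t => ∑ n ∈ Finset.Icc 1 (N - 1),
          Set.indicator (Set.Ico (x (n + 1)) (x n))
            (fun t => min (x n - t) (t - x (n + 1)) * (S x n / ((N : ℝ) - 1))) t := by
    funext t
    unfold yDen
    rw [Finset.mul_sum]
    refine Finset.sum_congr rfl ?_
    intro n hn
    simp only [Finset.mem_Icc] at hn
    by_cases hmem : x (n + 1) ≤ t ∧ t < x n
    · rw [if_pos hmem, Set.indicator_of_mem (Set.mem_Ico.mpr hmem)]
      have hteq : h t = min (x n - t) (t - x (n + 1)) := by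
        apply le_antisymm
        · apply le_min
          · have h1 : h t ≤ |t - x n| :=
              Finset.inf'_le _ (by simp only [Finset.mem_Icc]; omega)
            rwa [abs_sub_comm, abs_of_nonneg (by linarith [hmem.2])] at h1
          · have h1 : h t ≤ |t - x (n + 1)| :=
              Finset.inf'_le _ (by simp only [Finset.mem_Icc]; omega)
            rwa [abs_of_nonneg (by linarith [hmem.1])] at h1
        · apply Finset.le_inf'
          intro k hk
          simp only [Finset.mem_Icc] at hk
          rcases le_or_gt k n with hkn | hkn
          · have hxk : x n ≤ x k := hanti k n hk.1 hkn (by omega)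
            have : |t - x k| = x k - t := by
              rw [abs_sub_comm, abs_of_nonneg (by linarith [hmem.2])]
            rw [this]
            exact le_trans (min_le_left _ _) (by linarith)
          · have hxk : x k ≤ x (n + 1) := hanti (n + 1) k (by omega) hkn hk.2
            have : |t - x k| = t - x k := abs_of_nonneg (by linarith [hmem.1])
            rw [this]
            exact le_trans (min_le_right _ _) (by linarith)
      rw [hteq]
    · rw [if_neg hmem, Set.indicator_of_notMem (by rw [Set.mem_Ico]; exact hmem), mul_zero]
  have hcont : ∀ n : ℕ, Continuous (fun t : ℝ => min (x n - t) (t - x (n + 1)) * (S x n / ((N : ℝ) - 1))) :=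
    fun n => ((continuous_const.sub continuous_id).min (continuous_id.sub continuous_const)).mul continuous_const
  have hintegrable : ∀ n ∈ Finset.Icc 1 (N - 1),
      Integrable (fun t => Set.indicator (Set.Ico (x (n + 1)) (x n))
        (fun t => min (x n - t) (t - x (n + 1)) * (S x n / ((N : ℝ) - 1))) t) := by
    intro n _
    rw [MeasureTheory.integrable_indicator_iff measurableSet_Ico]
    exact ((hcont n).integrableOn_Icc).mono_set Set.Ico_subset_Icc_self
  have hterm : ∀ n ∈ Finset.Icc 1 (N - 1),
      (∫ t, Set.indicator (Set.Ico (x (n + 1)) (x n))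
        (fun t => min (x n - t) (t - x (n + 1)) * (S x n / ((N : ℝ) - 1))) t)
      = (x n - x (n + 1)) / (4 * ((N : ℝ) - 1)) := by
    intro n hn
    simp only [Finset.mem_Icc] at hn
    have hab : x (n + 1) < x n := hdec n hn.1 (by omega)
    have hrec := (hsol n hn.1 hn.2).2
    have hSn := hpos n hn.1 hn.2
    rw [MeasureTheory.integral_indicator measurableSet_Ico,
        MeasureTheory.setIntegral_congr_set MeasureTheory.Ico_ae_eq_Ioc,
        ← intervalIntegral.integral_of_le hab.le,
        intervalIntegral.integral_mul_const, min_integral _ _ hab.le]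
    have hprod : (x n - x (n + 1)) * S x n = 1 := by
      rw [hrec]; field_simp; ring
    field_simp
    nlinarith [hprod, sq_nonneg (x n - x (n + 1))]
  have hintval : (∫ t, h t * yDen N x t) = x 1 / (2 * ((N : ℝ) - 1)) := by
    rw [hint, MeasureTheory.integral_finset_sum _ hintegrable,
        Finset.sum_congr rfl hterm]
    have htel : ∑ n ∈ Finset.Icc 1 (N - 1), (x n - x (n + 1)) = x 1 - x N := by
      have e0 : Finset.Icc 1 (N - 1) = Finset.Ico 1 N := by
        rw [← Finset.Ico_add_one_right_eq_Icc]
        congr 1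
        omega
      rw [e0, Finset.sum_Ico_eq_sum_range]
      have this1 : ∀ i ∈ Finset.range (N - 1), x (1 + i) - x (1 + i + 1)
          = (fun j => x (j + 1)) i - (fun j => x (j + 1)) (i + 1) := by
        intro i _
        rw [add_comm 1 i]
      rw [Finset.sum_congr rfl this1, Finset.sum_range_sub' (fun j => x (j + 1)) (N - 1)]
      have eN : N - 1 + 1 = N := by omega
      show x (0 + 1) - x (N - 1 + 1) = x 1 - x N
      rw [eN, Nat.zero_add]
    rw [← Finset.sum_div, htel, hxN]
    field_simp
    ring
  refine ⟨h, hlip, hsum, hintval, ?_⟩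
  rw [hsum, hintval, zero_sub, abs_neg, abs_of_nonneg hval.le]
end
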